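/- arXiv:2512.06470 — 3 statements merged into one kernel-verified Lean document; each statement's English description precedes it below -/
import Mathlib

section
/- If s ≥ 0 is real, i, p are nonnegative integers, j is a positive integer, and j·s ≥ i − p, then for every positive integer k and nonnegative integer l with k − j − l ≥ 0, one has (k−j−l)^i · ((k−j−l)!)^s · (l!)^s ≤ k^p · (k!)^s. -/
set_option autoImplicit false

lemma aux_pow_factorial (m j : ℕ) : m ^ j * m.factorial ≤ (m + j).factorial := by
  induction j with
  | zero => simp
  | succ j ih =>
    have h1 : m ^ (j+1) * m.factorial = m * (m ^ j * m.factorial) := by ring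
    rw [h1]
    calc m * (m ^ j * m.factorial) ≤ (m + j + 1) * (m + j).factorial :=
          Nat.mul_le_mul (by omega) ih
      _ = (m + (j + 1)).factorial := by
          rw [show m + (j+1) = (m+j) + 1 from by omega, Nat.factorial_succ]

theorem stmt_0 (s : ℝ) (hs : 0 ≤ s) (i p j : ℕ) (hj : 1 ≤ j)
    (hjs : (i : ℝ) - p ≤ (j : ℝ) * s) :
    ∀ k l : ℕ, 1 ≤ k → j + l ≤ k →
      ((k - j - l : ℕ) : ℝ) ^ i * ((k - j - l : ℕ).factorial : ℝ) ^ s *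
          ((l.factorial : ℝ)) ^ s ≤
        (k : ℝ) ^ p * ((k.factorial : ℝ)) ^ s := by
  intro k l hk hjl
  set m : ℕ := k - j - l with hm
  have hmk : m + j + l = k := by omega
  have hrpow_pos : (0:ℝ) < ((k.factorial : ℝ)) ^ s :=
    Real.rpow_pos_of_pos (by exact_mod_cast k.factorial_pos) s
  have hkpow : (1:ℝ) ≤ (k : ℝ) ^ p :=
    one_le_pow₀ (by exact_mod_cast hk)
  -- key nat inequality : m^j * m! * l! ≤ k!
  have hnat : m ^ j * m.factorial * l.factorial ≤ k.factorial := by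
    calc m ^ j * m.factorial * l.factorial ≤ (m + j).factorial * l.factorial :=
          Nat.mul_le_mul_right _ (aux_pow_factorial m j)
      _ ≤ ((m + j) + l).factorial :=
          Nat.le_of_dvd (Nat.factorial_pos _)
            (Nat.factorial_mul_factorial_dvd_factorial_add _ _)
      _ = k.factorial := by rw [hmk]
  rcases Nat.eq_zero_or_pos m with hm0 | hm1
  · rcases Nat.eq_zero_or_pos i with hi0 | hi1
    · -- i = 0 : LHS = (m! l!)^s ≤ (k!)^s ≤ k^p (k!)^s
      subst hi0
      have h1 : (m.factorial : ℝ) ^ s * (l.factorial : ℝ) ^ s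
          ≤ ((k.factorial : ℝ)) ^ s := by
        rw [← Real.mul_rpow (by positivity) (by positivity)]
        apply Real.rpow_le_rpow (by positivity) _ hs
        have : m.factorial * l.factorial ≤ k.factorial := by
          rw [hm0]
          simpa using Nat.factorial_le (show l ≤ k by omega)
        exact_mod_cast this
      calc ((m:ℝ)) ^ 0 * (m.factorial : ℝ) ^ s * (l.factorial : ℝ) ^ s
          = (m.factorial : ℝ) ^ s * (l.factorial : ℝ) ^ s := by ring
        _ ≤ ((k.factorial : ℝ)) ^ s := h1
        _ ≤ (k : ℝ) ^ p * ((k.factorial : ℝ)) ^ s := by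
            nlinarith [hrpow_pos]
    · -- i ≥ 1 : LHS = 0
      rw [hm0]
      push_cast
      rw [zero_pow (by omega)]
      have : (0:ℝ) ≤ (k : ℝ) ^ p * ((k.factorial : ℝ)) ^ s := by positivity
      simpa using this
  · -- m ≥ 1
    have hM1 : (1:ℝ) ≤ (m:ℝ) := by exact_mod_cast hm1
    have hM0 : (0:ℝ) < (m:ℝ) := by linarith
    have hMK : (m:ℝ) ≤ (k:ℝ) := by exact_mod_cast (by omega : m ≤ k)
    -- m^i ≤ k^p * m^(j*s)  (rpow)
    have step1 : ((m:ℝ)) ^ i ≤ (k:ℝ) ^ p * (m:ℝ) ^ ((j:ℝ) * s) := by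
      have e1 : ((m:ℝ)) ^ i = (m:ℝ) ^ ((i:ℝ)) := by
        rw [Real.rpow_natCast]
      have e2 : (m:ℝ) ^ ((i:ℝ)) = (m:ℝ) ^ ((p:ℝ)) * (m:ℝ) ^ ((i:ℝ) - (p:ℝ)) := by
        rw [← Real.rpow_add hM0]; ring_nf
      have h3 : (m:ℝ) ^ ((p:ℝ)) ≤ (k:ℝ) ^ p := by
        rw [Real.rpow_natCast]
        exact pow_le_pow_left₀ (by positivity) hMK p
      have h4 : (m:ℝ) ^ ((i:ℝ) - (p:ℝ)) ≤ (m:ℝ) ^ ((j:ℝ) * s) :=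
        Real.rpow_le_rpow_of_exponent_le hM1 hjs
      rw [e1, e2]
      exact mul_le_mul h3 h4 (by positivity) (by positivity)
    -- m^(j*s) = (m^j)^s
    have step2 : (m:ℝ) ^ ((j:ℝ) * s) = ((m:ℝ) ^ j) ^ s := by
      rw [← Real.rpow_natCast (m:ℝ) j, ← Real.rpow_mul (le_of_lt hM0)]
    calc ((m:ℝ)) ^ i * (m.factorial : ℝ) ^ s * (l.factorial : ℝ) ^ s
        ≤ (k:ℝ) ^ p * (m:ℝ) ^ ((j:ℝ) * s) * (m.factorial : ℝ) ^ s
            * (l.factorial : ℝ) ^ s := by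
          have h5 : (0:ℝ) ≤ (m.factorial : ℝ) ^ s := by positivity
          have h6 : (0:ℝ) ≤ (l.factorial : ℝ) ^ s := by positivity
          nlinarith [mul_le_mul_of_nonneg_right
            (mul_le_mul_of_nonneg_right step1 h5) h6]
      _ = (k:ℝ) ^ p * (((m:ℝ) ^ j * (m.factorial : ℝ)) * (l.factorial : ℝ)) ^ s := by
          rw [step2, Real.mul_rpow (by positivity) (by positivity),
            Real.mul_rpow (by positivity) (by positivity)]
          ring
      _ ≤ (k:ℝ) ^ p * ((k.factorial : ℝ)) ^ s := by
          apply mul_le_mul_of_nonneg_left _ (by positivity)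
          apply Real.rpow_le_rpow (by positivity) _ hs
          exact_mod_cast hnat
end

section
/- If s ≥ 0 is real, i, p are nonnegative integers, j is a positive integer, and there exists a real s' < s with j·s' ≥ i − p, then for every positive integer k and nonnegative integer l with k − j − l ≥ 0, one has (k−j−l)^i · ((k−j−l)!)^s · (l!)^s / (k^p · (k!)^s) ≤ k^{s'−s}. -/
set_option autoImplicit false
set_option maxHeartbeats 1000000

-- k * m^(j-1) * (k-j)! ≤ k!  when 1 ≤ j ≤ k and m ≤ k - j
lemma fac3 (m : ℕ) : ∀ j : ℕ, 1 ≤ j → ∀ k : ℕ, j ≤ k → m ≤ k - j →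
    k * m ^ (j - 1) * (k - j).factorial ≤ k.factorial := by
  intro j hj
  induction j, hj using Nat.le_induction with
  | base =>
    intro k hk hm
    have := Nat.mul_factorial_pred (show k ≠ 0 by omega)
    simpa using this.le
  | succ j hj ih =>
    intro k hk hm
    have h1 : k * m ^ (j + 1 - 1) * (k - (j + 1)).factorial
        ≤ k * m ^ (j - 1) * (k - j).factorial := by
      have hkj : k - j = (k - (j + 1)) + 1 := by omega
      have hpow : m ^ (j + 1 - 1) = m ^ (j - 1) * m := by
        rw [← pow_succ]; congr 1; omega
      rw [hpow, hkj, Nat.factorial_succ]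
      have hmle : m ≤ (k - (j + 1)) + 1 := by omega
      calc k * (m ^ (j - 1) * m) * (k - (j + 1)).factorial
          = k * m ^ (j - 1) * (m * (k - (j + 1)).factorial) := by ring
        _ ≤ k * m ^ (j - 1) * (((k - (j + 1)) + 1) * (k - (j + 1)).factorial) :=
            Nat.mul_le_mul_left _ (Nat.mul_le_mul_right _ hmle)
    exact h1.trans (ih k (by omega) (by omega))

theorem stmt_1 (s s' : ℝ) (hs : 0 ≤ s) (hs' : s' < s) (i p j : ℕ) (hj : 1 ≤ j)
    (hjs : (i : ℝ) - p ≤ (j : ℝ) * s') :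
    ∀ k l : ℕ, 1 ≤ k → j + l ≤ k →
      ((k - j - l : ℕ) : ℝ) ^ i * ((k - j - l : ℕ).factorial : ℝ) ^ s *
          ((l.factorial : ℝ)) ^ s / ((k : ℝ) ^ p * ((k.factorial : ℝ)) ^ s) ≤
        (k : ℝ) ^ (s' - s) := by
  intro k l hk hkl
  set m : ℕ := k - j - l with hm
  have hml : m + l = k - j := by omega
  have hK1 : (1:ℝ) ≤ (k:ℝ) := by exact_mod_cast hk
  have hK0 : (0:ℝ) < (k:ℝ) := by positivity
  have hMK : (m:ℝ) ≤ (k:ℝ) := by exact_mod_cast (by omega : m ≤ k)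
  have hM0 : (0:ℝ) ≤ (m:ℝ) := by positivity
  have hj1 : (1:ℝ) ≤ (j:ℝ) := by exact_mod_cast hj
  -- factorial facts
  have f1 : (m.factorial * l.factorial : ℝ) ≤ ((k - j).factorial : ℝ) := by
    have h := Nat.factorial_mul_factorial_dvd_factorial_add m l
    rw [hml] at h
    exact_mod_cast Nat.le_of_dvd (Nat.factorial_pos _) h
  have f2 : (k:ℝ) * ((k - j).factorial : ℝ) ≤ (k.factorial : ℝ) := by
    have h := Nat.mul_factorial_pred (show k ≠ 0 by omega)
    have h2 : (k - j).factorial ≤ (k - 1).factorial :=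
      Nat.factorial_le (by omega)
    have h3 : k * (k - j).factorial ≤ k * (k - 1).factorial :=
      Nat.mul_le_mul_left _ h2
    rw [h] at h3
    exact_mod_cast h3
  have hden : (0:ℝ) < (k:ℝ) ^ p * (k.factorial : ℝ) ^ s := by positivity
  rw [div_le_iff₀ hden]
  have hnum : ((m.factorial : ℝ)) ^ s * ((l.factorial : ℝ)) ^ s
      ≤ (((k - j).factorial : ℝ)) ^ s := by
    rw [← Real.mul_rpow (by positivity) (by positivity)]
    exact Real.rpow_le_rpow (by positivity) (by exact_mod_cast f1) hs
  by_cases hc : (i:ℝ) ≤ (p:ℝ) + s'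
  · -- simple chain
    calc (m:ℝ) ^ i * (m.factorial : ℝ) ^ s * (l.factorial : ℝ) ^ s
        ≤ (k:ℝ) ^ i * (((k - j).factorial : ℝ)) ^ s := by
          rw [mul_assoc]
          exact mul_le_mul (pow_le_pow_left₀ hM0 hMK i) hnum (by positivity)
            (by positivity)
      _ = (k:ℝ) ^ (i:ℝ) * (((k - j).factorial : ℝ)) ^ s := by
          rw [Real.rpow_natCast]
      _ ≤ (k:ℝ) ^ (s' + (p:ℝ)) * (((k - j).factorial : ℝ)) ^ s :=
          mul_le_mul_of_nonneg_right
            (Real.rpow_le_rpow_of_exponent_le hK1 (by linarith)) (by positivity)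
      _ = (k:ℝ) ^ (s' - s) * ((k:ℝ) ^ p * ((k:ℝ) * ((k - j).factorial : ℝ)) ^ s) := by
          rw [Real.mul_rpow (le_of_lt hK0) (by positivity),
            ← Real.rpow_natCast (k:ℝ) p,
            show (k:ℝ) ^ (s' + (p:ℝ)) = (k:ℝ) ^ (s' - s) * (k:ℝ) ^ (p:ℝ) * (k:ℝ) ^ s by
              rw [← Real.rpow_add hK0, ← Real.rpow_add hK0]; ring_nf]
          ring
      _ ≤ (k:ℝ) ^ (s' - s) * ((k:ℝ) ^ p * (k.factorial : ℝ) ^ s) :=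
          mul_le_mul_of_nonneg_left
            (mul_le_mul_of_nonneg_left (Real.rpow_le_rpow (by positivity) f2 hs)
              (by positivity)) (by positivity)
  · -- refined case
    push_neg at hc
    have hs'pos : 0 < s' := by
      rcases le_or_gt s' 0 with h | h
      · exfalso
        nlinarith [mul_nonneg (sub_nonneg.mpr hj1) (neg_nonneg.mpr h)]
      · exact h
    rcases Nat.eq_zero_or_pos m with hm0 | hm1
    · -- m = 0 forces i ≥ 1, so LHS = 0
      have hi1 : i ≠ 0 := by
        intro h
        rw [h] at hc
        push_cast at hc
        have : (0:ℝ) ≤ (p:ℝ) := by positivity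
        linarith
      rw [hm0]
      push_cast
      rw [zero_pow hi1]
      have : (0:ℝ) ≤ (k:ℝ) ^ (s' - s) * ((k:ℝ) ^ p * (k.factorial : ℝ) ^ s) := by
        positivity
      simpa using this
    · have hM1 : (1:ℝ) ≤ (m:ℝ) := by exact_mod_cast hm1
      have hM0' : (0:ℝ) < (m:ℝ) := by linarith
      have f3 : (k:ℝ) * (m:ℝ) ^ (j - 1) * ((k - j).factorial : ℝ) ≤ (k.factorial : ℝ) := by
        exact_mod_cast fac3 m j hj k (by omega) (by omega)
      have hjc : ((j - 1 : ℕ) : ℝ) = (j:ℝ) - 1 := by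
        push_cast [Nat.cast_sub hj]; ring
      calc (m:ℝ) ^ i * (m.factorial : ℝ) ^ s * (l.factorial : ℝ) ^ s
          ≤ (m:ℝ) ^ i * (((k - j).factorial : ℝ)) ^ s := by
            rw [mul_assoc]
            exact mul_le_mul_of_nonneg_left hnum (by positivity)
        _ = (m:ℝ) ^ (i:ℝ) * (((k - j).factorial : ℝ)) ^ s := by
            rw [Real.rpow_natCast]
        _ ≤ (m:ℝ) ^ ((p:ℝ) + (j:ℝ) * s') * (((k - j).factorial : ℝ)) ^ s :=
            mul_le_mul_of_nonneg_right
              (Real.rpow_le_rpow_of_exponent_le hM1 (by linarith)) (by positivity)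
        _ ≤ ((k:ℝ) ^ ((p:ℝ) + s') * (m:ℝ) ^ (((j:ℝ) - 1) * s)) *
              (((k - j).factorial : ℝ)) ^ s := by
            have h1 : (m:ℝ) ^ ((p:ℝ) + (j:ℝ) * s')
                ≤ (k:ℝ) ^ ((p:ℝ) + s') * (m:ℝ) ^ (((j:ℝ) - 1) * s) := by
              have e : (p:ℝ) + (j:ℝ) * s' = ((p:ℝ) + s') + ((j:ℝ) - 1) * s' := by ring
              rw [e, Real.rpow_add hM0']
              have ha : (m:ℝ) ^ ((p:ℝ) + s') ≤ (k:ℝ) ^ ((p:ℝ) + s') :=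
                Real.rpow_le_rpow hM0 hMK (by positivity)
              have hb : (m:ℝ) ^ (((j:ℝ) - 1) * s') ≤ (m:ℝ) ^ (((j:ℝ) - 1) * s) :=
                Real.rpow_le_rpow_of_exponent_le hM1
                  (mul_le_mul_of_nonneg_left hs'.le (by linarith))
              exact mul_le_mul ha hb (by positivity) (by positivity)
            exact mul_le_mul_of_nonneg_right h1 (by positivity)
        _ = (k:ℝ) ^ (s' - s) *
              ((k:ℝ) ^ p * ((k:ℝ) * (m:ℝ) ^ (j - 1) * ((k - j).factorial : ℝ)) ^ s) := by
            have e1 : ((k:ℝ) * (m:ℝ) ^ (j - 1) * ((k - j).factorial : ℝ)) ^ s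
                = (k:ℝ) ^ s * (m:ℝ) ^ (((j:ℝ) - 1) * s) *
                  (((k - j).factorial : ℝ)) ^ s := by
              rw [Real.mul_rpow (by positivity) (by positivity),
                Real.mul_rpow (le_of_lt hK0) (by positivity),
                ← Real.rpow_natCast (m:ℝ) (j - 1), ← Real.rpow_mul hM0, hjc]
            rw [e1, ← Real.rpow_natCast (k:ℝ) p,
              show (k:ℝ) ^ ((p:ℝ) + s')
                  = (k:ℝ) ^ (s' - s) * (k:ℝ) ^ (p:ℝ) * (k:ℝ) ^ s by
                rw [← Real.rpow_add hK0, ← Real.rpow_add hK0]; ring_nf]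
            ring
        _ ≤ (k:ℝ) ^ (s' - s) * ((k:ℝ) ^ p * (k.factorial : ℝ) ^ s) :=
            mul_le_mul_of_nonneg_left
              (mul_le_mul_of_nonneg_left (Real.rpow_le_rpow (by positivity) f3 hs)
                (by positivity)) (by positivity)
end

section
/- If s ≥ 0 is real, i, p are nonnegative integers, j is a positive integer, and j·s = i − p, then for every positive integer k with k ≥ 2j, one has (k−j)^i · ((k−j)!)^s / (k^p · (k!)^s) ≥ 1/2^i. -/
set_option autoImplicit false

private lemma fact_le_aux (n m : ℕ) : (n + m).factorial ≤ n.factorial * (n + m) ^ m := by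
  induction m with
  | zero => simp
  | succ m ih =>
      have h1 : (n + (m+1)).factorial = (n + m + 1) * (n + m).factorial := by
        rw [show n + (m+1) = (n+m) + 1 by ring, Nat.factorial_succ]
      rw [h1]
      calc (n + m + 1) * (n + m).factorial
          ≤ (n + m + 1) * (n.factorial * (n + m) ^ m) :=
            Nat.mul_le_mul_left _ ih
        _ ≤ (n + m + 1) * (n.factorial * (n + m + 1) ^ m) := by
            exact Nat.mul_le_mul_left _ (Nat.mul_le_mul_left _
              (Nat.pow_le_pow_left (Nat.le_succ _) m))
        _ = n.factorial * (n + (m+1)) ^ (m+1) := by ring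
  
theorem stmt_2 (s : ℝ) (hs : 0 ≤ s) (i p j : ℕ) (hj : 1 ≤ j)
    (hjs : (j : ℝ) * s = (i : ℝ) - p) :
    ∀ k : ℕ, 2 * j ≤ k →
      ((k - j : ℕ) : ℝ) ^ i * ((k - j : ℕ).factorial : ℝ) ^ s /
          ((k : ℝ) ^ p * ((k.factorial : ℝ)) ^ s) ≥ 1 / 2 ^ i := by
  intro k hk
  have hjk : j ≤ k := by omega
  have hk1 : 1 ≤ k := by omega
  have hk0 : (0:ℝ) < k := by exact_mod_cast hk1
  have hkj1 : 1 ≤ k - j := by omega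
  have hkj0 : (0:ℝ) < ((k - j : ℕ) : ℝ) := by exact_mod_cast hkj1
  have ha : (0:ℝ) < ((k - j : ℕ).factorial : ℝ) := by exact_mod_cast (k - j).factorial_pos
  have hb : (0:ℝ) < (k.factorial : ℝ) := by exact_mod_cast k.factorial_pos
  set a : ℝ := ((k - j : ℕ).factorial : ℝ)
  -- factorial bound
  have hfacN : k.factorial ≤ (k - j).factorial * k ^ j := by
    have := fact_le_aux (k - j) j
    rwa [Nat.sub_add_cancel hjk] at this
  have hfac : (k.factorial : ℝ) ≤ a * (k:ℝ) ^ j := by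
    show (k.factorial : ℝ) ≤ ((k - j : ℕ).factorial : ℝ) * (k:ℝ) ^ j
    exact_mod_cast hfacN
  -- rpow computation
  have hrpow : (((k:ℝ) ^ j) : ℝ) ^ s = (k:ℝ) ^ i / (k:ℝ) ^ p := by
    rw [← Real.rpow_natCast (k:ℝ) j, ← Real.rpow_mul hk0.le, hjs,
      Real.rpow_sub hk0, Real.rpow_natCast, Real.rpow_natCast]
  -- denominator bound
  have hden : (k:ℝ) ^ p * (k.factorial : ℝ) ^ s ≤ a ^ s * (k:ℝ) ^ i := by
    have h1 : (k.factorial : ℝ) ^ s ≤ (a * (k:ℝ) ^ j) ^ s :=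
      Real.rpow_le_rpow hb.le hfac hs
    have h2 : (a * (k:ℝ) ^ j) ^ s = a ^ s * ((k:ℝ) ^ i / (k:ℝ) ^ p) := by
      rw [Real.mul_rpow ha.le (by positivity), hrpow]
    calc (k:ℝ) ^ p * (k.factorial : ℝ) ^ s
        ≤ (k:ℝ) ^ p * (a ^ s * ((k:ℝ) ^ i / (k:ℝ) ^ p)) := by
          exact mul_le_mul_of_nonneg_left (h2 ▸ h1) (by positivity)
      _ = a ^ s * (k:ℝ) ^ i := by field_simp
  have hdenpos : (0:ℝ) < (k:ℝ) ^ p * (k.factorial : ℝ) ^ s := by positivity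
  have haspos : (0:ℝ) < a ^ s := Real.rpow_pos_of_pos ha s
  -- chain
  have step1 : ((k - j : ℕ) : ℝ) ^ i * a ^ s / (a ^ s * (k:ℝ) ^ i)
      ≤ ((k - j : ℕ) : ℝ) ^ i * a ^ s / ((k:ℝ) ^ p * (k.factorial : ℝ) ^ s) := by
    apply div_le_div_of_nonneg_left (by positivity) hdenpos hden
  have step2 : ((k - j : ℕ) : ℝ) ^ i * a ^ s / (a ^ s * (k:ℝ) ^ i)
      = (((k - j : ℕ) : ℝ) / (k:ℝ)) ^ i := by
    rw [div_pow]
    field_simp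
  have step3 : (1/2 : ℝ) ^ i ≤ (((k - j : ℕ) : ℝ) / (k:ℝ)) ^ i := by
    apply pow_le_pow_left₀ (by norm_num)
    rw [div_le_div_iff₀ (by norm_num) hk0]
    have : (k:ℝ) ≤ 2 * ((k - j : ℕ) : ℝ) := by
      have : k ≤ 2 * (k - j) := by omega
      exact_mod_cast this
    linarith
  calc (1:ℝ) / 2 ^ i = (1/2 : ℝ) ^ i := by rw [one_div, one_div, inv_pow]
    _ ≤ (((k - j : ℕ) : ℝ) / (k:ℝ)) ^ i := step3
    _ = ((k - j : ℕ) : ℝ) ^ i * a ^ s / (a ^ s * (k:ℝ) ^ i) := step2.symm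
    _ ≤ _ := step1
end
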